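/- In the proof situation of the rank bound theorem: if b₁, b₂, … is a sequence in C_S(a) with b₁ = 1 and each b_{k+1} chosen of minimal χ-value outside the left K[a]-span of {b₁,…,b_k}, then for all φ₁,…,φ_k ∈ K[a] one has χ(Σᵢ φᵢbᵢ) = maxᵢ (χ(φᵢ) + χ(bᵢ)). -/

import Mathlib

/-- A pseudo-degree function on a (not necessarily associative) algebra `S`. -/
def IsPseudoDegree {S : Type*} [NonAssocRing S] (χ : S → WithBot ℤ) : Prop :=
  (∀ a : S, χ a = ⊥ ↔ a = 0) ∧
  (∀ a b : S, χ (a * b) = χ a + χ b) ∧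
  (∀ a b : S, χ (a + b) ≤ max (χ a) (χ b))

/-- The nucleus of `S`. -/
def nucleus (S : Type*) [NonAssocRing S] : Set S :=
  {a | (∀ b c : S, a * (b * c) = (a * b) * c) ∧
       (∀ b c : S, (b * a) * c = b * (a * c)) ∧
       (∀ b c : S, (b * c) * a = b * (c * a))}

/-- The centralizer of `a` in `S`. -/
def centralizer {S : Type*} [NonAssocRing S] (a : S) : Set S :=
  {b | a * b = b * a}

/-- Condition `D(ℓ)` for a subset `B` of `S` with respect to a pseudo-degree function
`χ`: every nonzero element of `B` has `χ`-value `≥ 0`, and whenever `ℓ + 1` elements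
of `B` are all mapped to the same integer by `χ`, some nontrivial `K`-linear
combination of them has strictly smaller `χ`-value. -/
def CondD (K : Type*) {S : Type*} [Field K] [NonAssocRing S] [Module K S]
    (χ : S → WithBot ℤ) (B : Set S) (ℓ : ℕ) : Prop :=
  (∀ b ∈ B, b ≠ 0 → 0 ≤ χ b) ∧
  ∀ (f : Fin (ℓ + 1) → S) (n : ℤ), (∀ i, f i ∈ B) →
    (∀ i, χ (f i) = (n : WithBot ℤ)) →
    ∃ c : Fin (ℓ + 1) → K, (∃ i, c i ≠ 0) ∧
      χ (∑ i, c i • f i) < (n : WithBot ℤ)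

/-- Powers of an element of a non-associative unital ring. -/
def apow {S : Type*} [NonAssocRing S] (a : S) : ℕ → S
  | 0 => 1
  | n + 1 => a * apow a n

/-- Evaluation of a polynomial `p ∈ K[x]` at an element `a` of a non-associative
`K`-algebra; for `a` in the nucleus this is the usual evaluation in `K[a]`. -/
noncomputable def evalAt {K S : Type*} [Field K] [NonAssocRing S] [Module K S]
    (a : S) (p : Polynomial K) : S :=
  p.sum fun i c => c • apow a i

/-- `c` lies in the left `K[a]`-linear span of `b 0, …, b (i-1)`. -/
def InSpanUpTo {K S : Type*} [Field K] [NonAssocRing S] [Module K S]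
    (a : S) (b : ℕ → S) (i : ℕ) (c : S) : Prop :=
  ∃ φ : ℕ → Polynomial K, c = ∑ j ∈ Finset.range i, evalAt (a := a) (φ j) * b j

set_option linter.unusedSectionVars false

section Aux

variable {K S : Type*} [Field K] [NonAssocRing S] [Module K S]
  [SMulCommClass K S S] [IsScalarTower K S S]
  {χ : S → WithBot ℤ}

theorem pd_zero (hχ : IsPseudoDegree χ) : χ 0 = ⊥ := (hχ.1 0).2 rfl

theorem pd_one (hχ : IsPseudoDegree χ) (h1 : (1 : S) ≠ 0) : χ 1 = 0 := by
  have h := hχ.2.1 1 1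
  rw [mul_one] at h
  obtain ⟨n, hn⟩ := WithBot.ne_bot_iff_exists.1 (fun hb => h1 ((hχ.1 1).1 hb))
  rw [← hn] at h ⊢
  have hn' : n = n + n := by exact_mod_cast h
  have : n = 0 := by omega
  rw [this]; rfl

theorem pd_smul_one (hχ : IsPseudoDegree χ) (h1 : (1 : S) ≠ 0)
    (hpos : ∀ c : K, c ≠ 0 → 0 ≤ χ (c • (1 : S))) {c : K} (hc : c ≠ 0) :
    χ (c • (1 : S)) = 0 := by
  have hmul : (c • (1 : S)) * (c⁻¹ • (1 : S)) = 1 := by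
    rw [smul_mul_assoc, mul_smul_comm, one_mul, smul_smul, mul_inv_cancel₀ hc, one_smul]
  have h := hχ.2.1 (c • (1 : S)) (c⁻¹ • (1 : S))
  rw [hmul, pd_one hχ h1] at h
  have h2 := hpos c hc
  have h3 := hpos c⁻¹ (inv_ne_zero hc)
  have hxb : χ (c • (1 : S)) ≠ ⊥ := by intro hb; rw [hb] at h2; simp at h2
  have hyb : χ (c⁻¹ • (1 : S)) ≠ ⊥ := by intro hb; rw [hb] at h3; simp at h3
  obtain ⟨nx, hnx⟩ := WithBot.ne_bot_iff_exists.1 hxb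
  obtain ⟨ny, hny⟩ := WithBot.ne_bot_iff_exists.1 hyb
  rw [← hnx] at h2 ⊢
  rw [← hny] at h3
  rw [← hnx, ← hny] at h
  have h0 : (0 : ℤ) = nx + ny := by exact_mod_cast h
  have hx : (0 : ℤ) ≤ nx := by exact_mod_cast h2
  have hy : (0 : ℤ) ≤ ny := by exact_mod_cast h3
  have : nx = 0 := by omega
  rw [this]; rfl

theorem pd_smul (hχ : IsPseudoDegree χ) (h1 : (1 : S) ≠ 0)
    (hpos : ∀ c : K, c ≠ 0 → 0 ≤ χ (c • (1 : S))) {c : K} (hc : c ≠ 0) (x : S) :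
    χ (c • x) = χ x := by
  have hx : c • x = (c • (1 : S)) * x := by rw [smul_mul_assoc, one_mul]
  rw [hx, hχ.2.1, pd_smul_one hχ h1 hpos hc, zero_add]

theorem pd_neg (hχ : IsPseudoDegree χ) (h1 : (1 : S) ≠ 0)
    (hpos : ∀ c : K, c ≠ 0 → 0 ≤ χ (c • (1 : S))) (x : S) : χ (-x) = χ x := by
  rw [← neg_one_smul K x, pd_smul hχ h1 hpos (by norm_num)]

theorem pd_add_eq_left (hχ : IsPseudoDegree χ) (h1 : (1 : S) ≠ 0)
    (hpos : ∀ c : K, c ≠ 0 → 0 ≤ χ (c • (1 : S))) {x y : S} (h : χ y < χ x) :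
    χ (x + y) = χ x := by
  refine le_antisymm ((hχ.2.2 x y).trans (by simp [le_of_lt h])) ?_
  by_contra hlt
  push_neg at hlt
  have h2 : χ x = χ ((x + y) + (-y)) := by rw [add_neg_cancel_right]
  have h3 : χ x ≤ max (χ (x + y)) (χ y) := by
    rw [h2]
    exact (hχ.2.2 _ _).trans (by rw [pd_neg hχ h1 hpos])
  exact absurd h3 (not_le.2 (max_lt hlt h))

theorem pd_sub_le (hχ : IsPseudoDegree χ) (h1 : (1 : S) ≠ 0)
    (hpos : ∀ c : K, c ≠ 0 → 0 ≤ χ (c • (1 : S))) (x y : S) :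
    χ (x - y) ≤ max (χ x) (χ y) := by
  rw [sub_eq_add_neg]
  exact (hχ.2.2 _ _).trans (by rw [pd_neg hχ h1 hpos])

theorem pd_sum_le (hχ : IsPseudoDegree χ) {ι : Type*} (s : Finset ι) (f : ι → S) :
    χ (∑ j ∈ s, f j) ≤ s.sup fun j => χ (f j) := by
  classical
  induction s using Finset.induction_on with
  | empty => simp [pd_zero hχ]
  | insert _ _ hx ih =>
    rename_i i s
    rw [Finset.sum_insert hx, Finset.sup_insert]
    exact (hχ.2.2 _ _).trans (max_le_max le_rfl ih)

end Aux

section Apow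

variable {K S : Type*} [Field K] [NonAssocRing S] [Module K S]
  [SMulCommClass K S S] [IsScalarTower K S S]
  {χ : S → WithBot ℤ} {a : S}

theorem apow_comm (ha : a ∈ nucleus S) (n : ℕ) : a * apow a n = apow a n * a := by
  induction n with
  | zero => simp [apow]
  | succ n ih => show a * (a * apow a n) = (a * apow a n) * a
                 rw [← ha.1 (apow a n) a, ih]

theorem apow_mul_apow_mul (ha : a ∈ nucleus S) (p q : ℕ) (x : S) :
    apow a p * (apow a q * x) = apow a (p + q) * x := by
  induction p with
  | zero => simp [apow]
  | succ p ih =>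
    have hq : p + 1 + q = (p + q) + 1 := by omega
    rw [hq]
    show (a * apow a p) * (apow a q * x) = a * apow a (p + q) * x
    rw [← ha.1 (apow a p) (apow a q * x), ih, ha.1]

theorem pd_apow (hχ : IsPseudoDegree χ) (h1 : (1 : S) ≠ 0) {m : ℕ}
    (hm : χ a = (m : ℤ)) (n : ℕ) : χ (apow a n) = ((n * m : ℕ) : ℤ) := by
  induction n with
  | zero => simpa [apow] using pd_one hχ h1
  | succ n ih =>
    show χ (a * apow a n) = _
    rw [hχ.2.1, hm, ih, ← WithBot.coe_add]
    congr 1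
    push_cast
    ring

theorem cent_add {x y : S} (hx : x ∈ centralizer a) (hy : y ∈ centralizer a) :
    x + y ∈ centralizer a := by
  simp only [centralizer, Set.mem_setOf_eq] at *
  rw [mul_add, add_mul, hx, hy]

theorem cent_smul {x : S} (c : K) (hx : x ∈ centralizer a) :
    c • x ∈ centralizer a := by
  simp only [centralizer, Set.mem_setOf_eq] at *
  rw [mul_smul_comm, smul_mul_assoc, hx]

theorem cent_apow_mul (ha : a ∈ nucleus S) {x : S} (hx : x ∈ centralizer a) (n : ℕ) :
    apow a n * x ∈ centralizer a := by
  simp only [centralizer, Set.mem_setOf_eq] at *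
  calc a * (apow a n * x) = (a * apow a n) * x := ha.1 _ _
    _ = (apow a n * a) * x := by rw [apow_comm ha]
    _ = apow a n * (a * x) := ha.2.1 _ _
    _ = apow a n * (x * a) := by rw [hx]
    _ = (apow a n * x) * a := (ha.2.2 _ _).symm

theorem cent_sum {ι : Type*} (s : Finset ι) (f : ι → S)
    (h : ∀ j ∈ s, f j ∈ centralizer a) : (∑ j ∈ s, f j) ∈ centralizer a := by
  classical
  induction s using Finset.induction_on with
  | empty => simp [centralizer]
  | insert _ _ hx ih =>
    rename_i i s
    rw [Finset.sum_insert hx]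
    exact cent_add (h i (by simp)) (ih fun j hj => h j (by simp [hj]))

end Apow

section EvalAt0

variable {K S : Type*} [Field K] [NonAssocRing S] [Module K S] {a : S}

theorem evalAt_zero : evalAt (K := K) a 0 = 0 := by
  simp [evalAt]

theorem evalAt_add (p q : Polynomial K) :
    evalAt a (p + q) = evalAt a p + evalAt a q := by
  unfold evalAt
  exact Polynomial.sum_add_index p q _ (fun i => by simp) (fun i c c' => by rw [add_smul])

theorem evalAt_monomial (n : ℕ) (c : K) :
    evalAt a (Polynomial.monomial n c) = c • apow a n := by
  unfold evalAt
  exact Polynomial.sum_monomial_index c _ (by simp)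

theorem evalAt_smul (c : K) (p : Polynomial K) :
    evalAt a (c • p) = c • evalAt a p := by
  unfold evalAt
  rw [Polynomial.sum_smul_index p c _ (fun i => by simp), Polynomial.smul_sum]
  simp [smul_smul]

theorem evalAt_sub (p q : Polynomial K) :
    evalAt a (p - q) = evalAt a p - evalAt a q := by
  have h : p - q = p + (-1 : K) • q := by
    rw [neg_one_smul]; ring
  rw [h, evalAt_add, evalAt_smul, neg_one_smul, ← sub_eq_add_neg]

end EvalAt0

section EvalAt

variable {K S : Type*} [Field K] [NonAssocRing S] [Module K S]
  [SMulCommClass K S S] [IsScalarTower K S S]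
  {χ : S → WithBot ℤ} {a : S}

theorem pd_evalAt (hχ : IsPseudoDegree χ) (h1 : (1 : S) ≠ 0)
    (hpos : ∀ c : K, c ≠ 0 → 0 ≤ χ (c • (1 : S))) {m : ℕ} (hm : χ a = (m : ℤ))
    (hmpos : 0 < m) (p : Polynomial K) (hp : p ≠ 0) :
    χ (evalAt a p) = ((p.natDegree * m : ℕ) : ℤ) := by
  generalize hN : p.natDegree = N
  induction N using Nat.strong_induction_on generalizing p with
  | _ N ih =>
  have hdecomp : evalAt a p =
      p.leadingCoeff • apow a p.natDegree + evalAt a p.eraseLead := by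
    conv_lhs => rw [← Polynomial.eraseLead_add_monomial_natDegree_leadingCoeff p]
    rw [evalAt_add, evalAt_monomial, add_comm]
  have hlc : p.leadingCoeff ≠ 0 := Polynomial.leadingCoeff_ne_zero.2 hp
  have hlead : χ (p.leadingCoeff • apow a p.natDegree) = ((p.natDegree * m : ℕ) : ℤ) := by
    rw [pd_smul hχ h1 hpos hlc, pd_apow hχ h1 hm]
  have herase : χ (evalAt a p.eraseLead) < ((p.natDegree * m : ℕ) : ℤ) := by
    by_cases he : p.eraseLead = 0
    · rw [he, evalAt_zero, pd_zero hχ]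
      exact WithBot.bot_lt_coe _
    · have hdlt : p.eraseLead.natDegree < p.natDegree :=
        Polynomial.natDegree_lt_natDegree he (Polynomial.degree_eraseLead_lt hp)
      rw [ih p.eraseLead.natDegree (by omega) p.eraseLead he rfl]
      have : p.eraseLead.natDegree * m < p.natDegree * m :=
        (Nat.mul_lt_mul_right hmpos).2 hdlt
      exact_mod_cast this
  rw [hdecomp, pd_add_eq_left hχ h1 hpos (hlead ▸ herase), hlead, hN]

theorem pd_evalAt_lt (hχ : IsPseudoDegree χ) (h1 : (1 : S) ≠ 0)
    (hpos : ∀ c : K, c ≠ 0 → 0 ≤ χ (c • (1 : S))) {m : ℕ} (hm : χ a = (m : ℤ))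
    (hmpos : 0 < m) (p : Polynomial K) (d : ℕ) (hp : p = 0 ∨ p.natDegree < d) :
    χ (evalAt a p) < ((d * m : ℕ) : ℤ) := by
  rcases hp with rfl | hd
  · rw [evalAt_zero, pd_zero hχ]; exact WithBot.bot_lt_coe _
  · by_cases h0 : p = 0
    · rw [h0, evalAt_zero, pd_zero hχ]; exact WithBot.bot_lt_coe _
    · rw [pd_evalAt hχ h1 hpos hm hmpos p h0]
      exact_mod_cast (Nat.mul_lt_mul_right hmpos).2 hd

end EvalAt

theorem inSpan_mono {K S : Type*} [Field K] [NonAssocRing S] [Module K S]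
    {a : S} {b : ℕ → S} {i i' : ℕ} {c : S} (hii : i ≤ i')
    (h : InSpanUpTo (K := K) a b i c) : InSpanUpTo (K := K) a b i' c := by
  obtain ⟨ψ, rfl⟩ := h
  refine ⟨fun j => if j < i then ψ j else 0, ?_⟩
  have h1 : ∀ j ∈ Finset.range i, evalAt (a := a) (ψ j) * b j =
      evalAt (a := a) (if j < i then ψ j else 0) * b j := fun j hj => by
    rw [if_pos (Finset.mem_range.1 hj)]
  refine (Finset.sum_congr rfl h1).trans
    (Finset.sum_subset (Finset.range_subset_range.2 hii) fun x _ hnx => ?_)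
  rw [if_neg (by simpa using hnx), evalAt_zero, zero_mul]


/-- In the setting of the rank-bound theorem: let `b 0 = 1` and let each `b i`
(`i > 0`) be an element of `C_S(a)` of minimal `χ`-value outside the left
`K[a]`-span of the previous ones.  Then for any `φ₀, …, φ_{k-1} ∈ K[x]`,
`χ (Σ_j φ_j(a)·b_j) = max_j (χ (φ_j(a)) + χ (b_j))`. -/
theorem degree_of_span_combination {K S : Type*} [Field K] [NonAssocRing S]
    [Module K S] [SMulCommClass K S S] [IsScalarTower K S S]
    (χ : S → WithBot ℤ) (hχ : IsPseudoDegree χ)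
    (a : S) (ha : a ∈ nucleus S) (m : ℕ) (hm : χ a = (m : ℤ)) (hmpos : 0 < m)
    (ℓ : ℕ) (hℓ : 0 < ℓ) (hD : CondD K χ (centralizer a) ℓ)
    (b : ℕ → S) (hb0 : b 0 = 1) (hbC : ∀ i, b i ∈ centralizer a)
    (hbout : ∀ i, 0 < i → ¬ InSpanUpTo (K := K) a b i (b i))
    (hbmin : ∀ i, 0 < i → ∀ c ∈ centralizer a,
      ¬ InSpanUpTo (K := K) a b i c → χ (b i) ≤ χ c)
    (k : ℕ) (φ : ℕ → Polynomial K) :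
    χ (∑ j ∈ Finset.range k, evalAt (a := a) (φ j) * b j) =
      (Finset.range k).sup fun j => χ (evalAt (a := a) (φ j)) + χ (b j) := by
  classical
  have hane : a ≠ 0 := by
    intro h0
    rw [h0, pd_zero hχ] at hm
    exact WithBot.bot_ne_coe hm
  have h1 : (1 : S) ≠ 0 := fun h => hane (by rw [← mul_one a, h, mul_zero])
  have hone_cent : (1 : S) ∈ centralizer a := by
    simp only [centralizer, Set.mem_setOf_eq, mul_one, one_mul]
  have hpos : ∀ c : K, c ≠ 0 → 0 ≤ χ (c • (1 : S)) := fun c hc =>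
    hD.1 (c • (1 : S)) (cent_smul c hone_cent) (smul_ne_zero hc h1)
  set F : ℕ → WithBot ℤ := fun j => χ (evalAt (a := a) (φ j)) + χ (b j) with hF
  set M := (Finset.range k).sup F with hMdef
  set Sm := ∑ j ∈ Finset.range k, evalAt (a := a) (φ j) * b j with hSm
  have hterm : ∀ j, χ (evalAt (a := a) (φ j) * b j) = F j := fun j => hχ.2.1 _ _
  have hle : χ Sm ≤ M :=
    (pd_sum_le hχ _ _).trans_eq (Finset.sup_congr rfl fun j _ => hterm j)
  rcases lt_or_eq_of_le hle with h | h
  swap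
  · exact h
  exfalso
  have hMbot : M ≠ ⊥ := fun hb => by rw [hb] at h; exact absurd h (by simp)
  have hk : (Finset.range k).Nonempty := by
    rcases Finset.eq_empty_or_nonempty (Finset.range k) with he | hne
    · exact absurd (by rw [hMdef, he, Finset.sup_empty]) hMbot
    · exact hne
  obtain ⟨j0, hj0mem, hj0⟩ := Finset.exists_mem_eq_sup (Finset.range k) hk F
  set T := (Finset.range k).filter (fun j => F j = M) with hT
  have hTsub : T ⊆ Finset.range k := Finset.filter_subset _ _
  have hTne : T.Nonempty := ⟨j0, Finset.mem_filter.2 ⟨hj0mem, hj0.symm⟩⟩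
  set js := T.max' hTne with hjs
  have hjsT : js ∈ T := T.max'_mem hTne
  have hMT : ∀ j ∈ T, F j = M := fun j hj => (Finset.mem_filter.1 hj).2
  have hφne : ∀ j ∈ T, φ j ≠ 0 := by
    intro j hj h0
    apply hMbot
    rw [← hMT j hj, hF]
    simp only [h0, evalAt_zero, pd_zero hχ]
    exact WithBot.bot_add _
  have hbne : ∀ j ∈ T, b j ≠ 0 := by
    intro j hj h0
    apply hMbot
    rw [← hMT j hj, hF]
    simp only [h0, pd_zero hχ]
    exact WithBot.add_bot _
  set d : ℕ → ℕ := fun j => (φ j).natDegree with hd'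
  set c : ℕ → K := fun j => (φ j).leadingCoeff with hc'
  have hχφ : ∀ j ∈ T, χ (evalAt (a := a) (φ j)) = ((d j * m : ℕ) : ℤ) :=
    fun j hj => pd_evalAt hχ h1 hpos hm hmpos (φ j) (hφne j hj)
  have hMj : ∀ j ∈ T, (((d j * m : ℕ) : ℤ) : WithBot ℤ) + χ (b j) = M := by
    intro j hj
    rw [← hχφ j hj]
    exact hMT j hj
  have hβ : ∀ j ∈ T, ∃ β : ℤ, χ (b j) = (β : WithBot ℤ) := by
    intro j hj
    obtain ⟨β, hβ⟩ := WithBot.ne_bot_iff_exists.1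
      (fun hb => hbne j hj ((hχ.1 (b j)).1 hb))
    exact ⟨β, hβ.symm⟩
  -- monotonicity of χ ∘ b on T
  have hbmono : ∀ j ∈ T, χ (b j) ≤ χ (b js) := by
    intro j hj
    rcases eq_or_lt_of_le (T.le_max' j hj) with heq | hlt
    · rw [heq]
    · have hjs_pos : 0 < js := lt_of_le_of_lt (Nat.zero_le j) hlt
      by_cases hj0' : j = 0
      · rw [hj0', hb0, pd_one hχ h1]
        exact hD.1 (b js) (hbC js) (hbne js hjsT)
      · refine hbmin j (Nat.pos_of_ne_zero hj0') (b js) (hbC js) ?_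
        intro hsp
        exact hbout js hjs_pos (inSpan_mono (le_of_lt hlt) hsp)
  have hdle : ∀ j ∈ T, d js ≤ d j := by
    intro j hj
    obtain ⟨β, hβj⟩ := hβ j hj
    obtain ⟨βs, hβs⟩ := hβ js hjsT
    have he1 : (((d j * m : ℕ) : ℤ) : WithBot ℤ) + (β : WithBot ℤ) =
        (((d js * m : ℕ) : ℤ) : WithBot ℤ) + (βs : WithBot ℤ) := by
      rw [← hβj, ← hβs, hMj j hj, hMj js hjsT]
    have he2 : ((d j * m : ℕ) : ℤ) + β = ((d js * m : ℕ) : ℤ) + βs := by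
      exact_mod_cast he1
    have he3 : (β : WithBot ℤ) ≤ (βs : WithBot ℤ) := by
      rw [← hβj, ← hβs]; exact hbmono j hj
    have he4 : β ≤ βs := by exact_mod_cast he3
    have he5 : ((d js : ℤ)) * m ≤ ((d j : ℤ)) * m := by push_cast at he2; linarith
    have he6 : (d js : ℤ) ≤ (d j : ℤ) :=
      le_of_mul_le_mul_right he5 (by exact_mod_cast hmpos)
    exact_mod_cast he6
  set w := ∑ j ∈ T, c j • (apow a (d j - d js) * b j) with hw'
  set x := ∑ j ∈ T, c j • (apow a (d j) * b j) with hx'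
  have hstepA : apow a (d js) * w = x := by
    rw [hw', hx', Finset.mul_sum]
    refine Finset.sum_congr rfl fun j hj => ?_
    rw [mul_smul_comm, apow_mul_apow_mul ha, Nat.add_sub_cancel' (hdle j hj)]
  set r : ℕ → Polynomial K := fun j => if j ∈ T then (φ j).eraseLead else φ j with hr'
  set lower := ∑ j ∈ Finset.range k, evalAt (a := a) (r j) * b j with hlower'
  have hsplit : Sm = x + lower := by
    rw [hSm, hx', hlower']
    have hterm2 : ∀ j ∈ Finset.range k, evalAt (a := a) (φ j) * b j =
        (if j ∈ T then c j • (apow a (d j) * b j) else 0) + evalAt (a := a) (r j) * b j := by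
      intro j _
      by_cases hj : j ∈ T
      · rw [if_pos hj, hr']
        simp only [if_pos hj]
        conv_lhs => rw [← Polynomial.eraseLead_add_monomial_natDegree_leadingCoeff (φ j)]
        rw [evalAt_add, evalAt_monomial, add_mul, smul_mul_assoc, add_comm]
      · rw [if_neg hj, hr']
        simp only [if_neg hj, zero_add]
    rw [Finset.sum_congr rfl hterm2, Finset.sum_add_distrib, Finset.sum_ite_mem,
      Finset.inter_eq_right.2 hTsub]
  have hlower : χ lower < M := by
    refine lt_of_le_of_lt (pd_sum_le hχ _ _) ?_
    rw [Finset.sup_lt_iff (bot_lt_iff_ne_bot.2 hMbot)]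
    intro j hjk
    rw [hχ.2.1]
    by_cases hj : j ∈ T
    · have hr0 : r j = (φ j).eraseLead := by rw [hr']; simp [hj]
      have hlt : χ (evalAt (a := a) (r j)) < ((d j * m : ℕ) : ℤ) := by
        rw [hr0]
        refine pd_evalAt_lt hχ h1 hpos hm hmpos _ _ ?_
        by_cases he : (φ j).eraseLead = 0
        · exact Or.inl he
        · exact Or.inr (Polynomial.natDegree_lt_natDegree he
            (Polynomial.degree_eraseLead_lt (hφne j hj)))
      obtain ⟨β, hβj⟩ := hβ j hj
      calc χ (evalAt (a := a) (r j)) + χ (b j)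
          < (((d j * m : ℕ) : ℤ) : WithBot ℤ) + χ (b j) := by
            rw [hβj]
            exact WithBot.add_lt_add_right (WithBot.coe_ne_bot) hlt
        _ = M := hMj j hj
    · have hr0 : r j = φ j := by rw [hr']; simp [hj]
      rw [hr0]
      show F j < M
      refine lt_of_le_of_ne (Finset.le_sup (f := F) hjk) ?_
      intro hFM
      exact hj (Finset.mem_filter.2 ⟨hjk, hFM⟩)
  have hx : χ x < M := by
    have hxeq : x = Sm - lower := by rw [hsplit, add_sub_cancel_right]
    rw [hxeq]
    exact lt_of_le_of_lt (pd_sub_le hχ h1 hpos _ _) (max_lt h hlower)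
  have hcjs : c js ≠ 0 := Polynomial.leadingCoeff_ne_zero.2 (hφne js hjsT)
  have hw : χ w < χ (b js) := by
    have hxw : χ x = (((d js * m : ℕ) : ℤ) : WithBot ℤ) + χ w := by
      rw [← hstepA, hχ.2.1, pd_apow hχ h1 hm]
    rw [hxw, ← hMj js hjsT] at hx
    exact (WithBot.add_lt_add_iff_left (WithBot.coe_ne_bot)).1 hx
  rcases Nat.eq_zero_or_pos js with hjs0 | hjspos
  · -- js = 0 : T = {0}, w = c 0 • 1, contradiction
    have hT0 : T = {0} := by
      apply Finset.eq_singleton_iff_unique_mem.2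
      refine ⟨hjs0 ▸ hjsT, fun j hj => ?_⟩
      have := T.le_max' j hj
      omega
    have hweq : w = c 0 • (1 : S) := by
      rw [hw', hT0, Finset.sum_singleton]
      have hd0 : d 0 - d js = 0 := by rw [hjs0]; omega
      rw [hd0]
      show c 0 • ((1 : S) * b 0) = c 0 • (1 : S)
      rw [one_mul, hb0]
    have hc0 : c 0 ≠ 0 := by
      rw [← hjs0]; exact hcjs
    rw [hweq, pd_smul hχ h1 hpos hc0, pd_one hχ h1, hjs0, hb0, pd_one hχ h1] at hw
    exact absurd hw (lt_irrefl _)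
  · -- js > 0
    have hwc : w ∈ centralizer a :=
      cent_sum _ _ fun j _ => cent_smul _ (cent_apow_mul ha (hbC j) _)
    have hwspan : InSpanUpTo (K := K) a b js w := by
      by_contra hns
      exact absurd (hbmin js hjspos w hwc hns) (not_le.2 hw)
    obtain ⟨ψ, hψ⟩ := hwspan
    apply hbout js hjspos
    refine ⟨fun j => (c js)⁻¹ •
      (ψ j - if j ∈ T then Polynomial.monomial (d j - d js) (c j) else 0), ?_⟩
    have hstep : ∀ j ∈ Finset.range js,
        evalAt (a := a) ((c js)⁻¹ •
          (ψ j - if j ∈ T then Polynomial.monomial (d j - d js) (c j) else 0)) * b j =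
        (c js)⁻¹ • (evalAt (a := a) (ψ j) * b j -
          (if j ∈ T then c j • (apow a (d j - d js) * b j) else 0)) := by
      intro j _
      rw [evalAt_smul, evalAt_sub, smul_mul_assoc, sub_mul]
      congr 1
      by_cases hj : j ∈ T
      · rw [if_pos hj, if_pos hj, evalAt_monomial, smul_mul_assoc]
      · rw [if_neg hj, if_neg hj, evalAt_zero, zero_mul]
    rw [Finset.sum_congr rfl hstep, ← Finset.smul_sum, Finset.sum_sub_distrib,
      Finset.sum_ite_mem]
    have hint : Finset.range js ∩ T = T.erase js := by
      ext j
      simp only [Finset.mem_inter, Finset.mem_range, Finset.mem_erase]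
      constructor
      · rintro ⟨hlt, hT2⟩; exact ⟨Nat.ne_of_lt hlt, hT2⟩
      · rintro ⟨hne, hT2⟩; exact ⟨lt_of_le_of_ne (T.le_max' j hT2) hne, hT2⟩
    have herase : ∑ j ∈ T.erase js, c j • (apow a (d j - d js) * b j) =
        w - c js • b js := by
      rw [eq_sub_iff_add_eq, add_comm, hw', ← Finset.add_sum_erase T _ hjsT]
      congr 1
      rw [Nat.sub_self]
      show c js • b js = c js • ((1 : S) * b js)
      rw [one_mul]
    rw [hint, herase, ← hψ, sub_sub_cancel, smul_smul, inv_mul_cancel₀ hcjs, one_smul]
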